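/- Let h : ℝ² → ℝ be a continuous function with h(0, 0) = 0. Define on ℝ³ the binary operation (x₁, y₁, z₁) ∗ (x₂, y₂, z₂) = (x₁ + x₂·e^{z₁}, y₁ + y₂ − z₂·h(x₁, z₁), z₁ + z₂). Then (ℝ³, ∗) is a topological loop with identity element (0, 0, 0): the operation ∗ is continuous, (0,0,0) is a two-sided identity, for every a ∈ ℝ³ the left translation x ↦ a ∗ x and the right translation x ↦ x ∗ a are bijections of ℝ³, and the two division maps (a, b) ↦ a\b and (a, b) ↦ b/a are continuous. -/

import Mathlib

/-- The multiplication
`(x₁,y₁,z₁) ∗ (x₂,y₂,z₂) = (x₁ + x₂ e^{z₁}, y₁ + y₂ − z₂ h(x₁,z₁), z₁ + z₂)`. -/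
noncomputable def loopMul9 (h : ℝ × ℝ → ℝ) (p q : ℝ × ℝ × ℝ) : ℝ × ℝ × ℝ :=
  (p.1 + q.1 * Real.exp p.2.2, p.2.1 + q.2.1 - q.2.2 * h (p.1, p.2.2), p.2.2 + q.2.2)

/-- For every continuous `h : ℝ² → ℝ` with `h(0,0) = 0`, the operation `loopMul9 h`
turns `ℝ³` into a topological loop with identity `(0,0,0)`. -/
theorem loopMul9_is_topological_loop (h : ℝ × ℝ → ℝ) (hh : Continuous h)
    (hh0 : h (0, 0) = 0) :
    Continuous (fun p : (ℝ × ℝ × ℝ) × (ℝ × ℝ × ℝ) => loopMul9 h p.1 p.2) ∧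
    (∀ a : ℝ × ℝ × ℝ, loopMul9 h ((0:ℝ), (0:ℝ), (0:ℝ)) a = a ∧
      loopMul9 h a ((0:ℝ), (0:ℝ), (0:ℝ)) = a) ∧
    (∀ a : ℝ × ℝ × ℝ, Function.Bijective (loopMul9 h a)) ∧
    (∀ a : ℝ × ℝ × ℝ, Function.Bijective (fun x => loopMul9 h x a)) ∧
    ∃ ld rd : (ℝ × ℝ × ℝ) → (ℝ × ℝ × ℝ) → (ℝ × ℝ × ℝ),
      Continuous (fun p : (ℝ × ℝ × ℝ) × (ℝ × ℝ × ℝ) => ld p.1 p.2) ∧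
      Continuous (fun p : (ℝ × ℝ × ℝ) × (ℝ × ℝ × ℝ) => rd p.1 p.2) ∧
      (∀ a b : ℝ × ℝ × ℝ, loopMul9 h a (ld a b) = b ∧ loopMul9 h (rd a b) a = b) := by
  set ld : (ℝ × ℝ × ℝ) → (ℝ × ℝ × ℝ) → (ℝ × ℝ × ℝ) := fun a b =>
    ((b.1 - a.1) * Real.exp (-a.2.2),
      b.2.1 - a.2.1 + (b.2.2 - a.2.2) * h (a.1, a.2.2), b.2.2 - a.2.2) with hld
  set rd : (ℝ × ℝ × ℝ) → (ℝ × ℝ × ℝ) → (ℝ × ℝ × ℝ) := fun a b =>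
    (b.1 - a.1 * Real.exp (b.2.2 - a.2.2),
      b.2.1 - a.2.1 + a.2.2 * h (b.1 - a.1 * Real.exp (b.2.2 - a.2.2), b.2.2 - a.2.2),
      b.2.2 - a.2.2) with hrd
  have hldiv : ∀ a b : ℝ × ℝ × ℝ, loopMul9 h a (ld a b) = b := by
    intro a b
    simp only [loopMul9, hld, ← Real.exp_add]
    ext <;> simp [mul_assoc, ← Real.exp_add] <;> ring
  have hrdiv : ∀ a b : ℝ × ℝ × ℝ, loopMul9 h (rd a b) a = b := by
    intro a b
    simp only [loopMul9, hrd]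
    ext <;> simp [mul_assoc, ← Real.exp_add] <;> ring
  have hldiv' : ∀ a b : ℝ × ℝ × ℝ, ld a (loopMul9 h a b) = b := by
    intro a b
    simp only [loopMul9, hld, ← Real.exp_add]
    ext <;> simp [mul_assoc, ← Real.exp_add] <;> ring
  have hrdiv' : ∀ a b : ℝ × ℝ × ℝ, rd a (loopMul9 h b a) = b := by
    intro a b
    simp only [loopMul9, hrd]
    ext <;> simp [mul_assoc, ← Real.exp_add] <;> ring
  refine ⟨?_, ?_, ?_, ?_, ld, rd, ?_, ?_, fun a b => ⟨hldiv a b, hrdiv a b⟩⟩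
  · unfold loopMul9; fun_prop
  · intro a
    have hh0' : h 0 = 0 := hh0
    simp [loopMul9, hh0', hh0]
  · intro a
    exact Function.bijective_iff_has_inverse.2 ⟨ld a, hldiv' a, hldiv a⟩
  · intro a
    exact Function.bijective_iff_has_inverse.2 ⟨rd a, hrdiv' a, hrdiv a⟩
  · simp only [hld]; fun_prop
  · simp only [hrd]; fun_prop
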